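/- Let X be a real normed vector space, with metric d(x, y) = ‖x − y‖, and S : ℝ≥0 → X → X a semigroup: S(0) = id and S(t + s) = S(t) ∘ S(s) for all t, s ≥ 0. Assume: (i) for each t ≥ 0, S(t) : X → X is continuous; (ii) there exists t₀ > 0 such that for every bounded set B ⊆ X, the image S(t₀)(B) has compact closure; (iii) there are sets B₀ ⊆ U ⊆ X with B₀ bounded and nonempty, U open and convex, and B₀ absorbing in U: for every bounded B ⊆ U there exists T(B) > 0 with S(t)(B) ⊆ B₀ for all t > T(B); (iv) for every x ∈ X, the map t ↦ S(t)(x) is continuous from ℝ≥0 to X. Then the set A = ω(B₀) = ⋂_{s ≥ 0} closure(⋃_{t ≥ s} S(t)(B₀)) is connected. -/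

import Mathlib

open Set

/-- The ω-limit set of a set `B` under a semigroup `S` of (time-indexed) maps:
`ω(B) = ⋂_{s ≥ 0} closure (⋃_{t ≥ s} S t '' B)`. -/
def omegaLimitSet {X : Type*} [TopologicalSpace X] (S : ℝ → X → X) (B : Set X) : Set X :=
  ⋂ s ∈ Set.Ici (0 : ℝ), closure (⋃ t ∈ Set.Ici s, S t '' B)

/-- A directed intersection of nonempty compact closed preconnected sets is connected. -/
lemma isConnected_iInter_aux {X : Type*} [TopologicalSpace X] [T2Space X] {ι : Type*}
    [Nonempty ι] {K : ι → Set X} (hd : Directed (· ⊇ ·) K)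
    (hne : ∀ i, (K i).Nonempty) (hc : ∀ i, IsCompact (K i)) (hcl : ∀ i, IsClosed (K i))
    (hconn : ∀ i, IsPreconnected (K i)) : IsConnected (⋂ i, K i) := by
  have hKne : (⋂ i, K i).Nonempty :=
    IsCompact.nonempty_iInter_of_directed_nonempty_isCompact_isClosed K hd hne hc hcl
  refine ⟨hKne, ?_⟩
  set Ω := ⋂ i, K i with hΩ
  have hΩc : IsCompact Ω := by
    obtain i := Classical.arbitrary ι
    exact (hc i).of_isClosed_subset (isClosed_iInter hcl) (iInter_subset _ i)
  intro u v hu hv huv hune hvne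
  by_contra hemp
  rw [Set.not_nonempty_iff_eq_empty] at hemp
  -- A = Ω ∩ u and B = Ω ∩ v are disjoint compact sets covering Ω
  have hA : IsCompact (Ω ∩ u) := by
    have : Ω ∩ u = Ω \ v := by
      ext x; constructor
      · rintro ⟨hx, hxu⟩
        refine ⟨hx, fun hxv => ?_⟩
        have : x ∈ Ω ∩ (u ∩ v) := ⟨hx, hxu, hxv⟩
        simp [hemp] at this
      · rintro ⟨hx, hxv⟩
        exact ⟨hx, (huv hx).resolve_right hxv⟩
    rw [this]; exact hΩc.diff hv
  have hB : IsCompact (Ω ∩ v) := by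
    have : Ω ∩ v = Ω \ u := by
      ext x; constructor
      · rintro ⟨hx, hxv⟩
        refine ⟨hx, fun hxu => ?_⟩
        have : x ∈ Ω ∩ (u ∩ v) := ⟨hx, hxu, hxv⟩
        simp [hemp] at this
      · rintro ⟨hx, hxu⟩
        exact ⟨hx, (huv hx).resolve_left hxu⟩
    rw [this]; exact hΩc.diff hu
  have hdis : Disjoint (Ω ∩ u) (Ω ∩ v) := by
    rw [Set.disjoint_iff_inter_eq_empty]
    rw [show (Ω ∩ u) ∩ (Ω ∩ v) = Ω ∩ (u ∩ v) by ext x; simp; tauto, hemp]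
  obtain ⟨u', v', hu', hv', hAu', hBv', hu'v'⟩ :=
    SeparatedNhds.of_isCompact_isCompact hA hB hdis
  -- find one K i contained in u' ∪ v'
  have hcov : Ω ⊆ u' ∪ v' := fun x hx => by
    rcases huv hx with h | h
    · exact Or.inl (hAu' ⟨hx, h⟩)
    · exact Or.inr (hBv' ⟨hx, h⟩)
  have hW : IsOpen (u' ∪ v') := hu'.union hv'
  have : ∃ i, K i ⊆ u' ∪ v' := by
    by_contra hno
    push_neg at hno
    have hne' : ∀ i, (K i \ (u' ∪ v')).Nonempty := by
      intro i
      obtain ⟨x, hx, hx'⟩ := Set.not_subset.mp (hno i)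
      exact ⟨x, hx, hx'⟩
    have hd' : Directed (· ⊇ ·) (fun i => K i \ (u' ∪ v')) := fun i j => by
      obtain ⟨k, hk₁, hk₂⟩ := hd i j
      exact ⟨k, Set.diff_subset_diff_left hk₁, Set.diff_subset_diff_left hk₂⟩
    have hne'' :
        (⋂ i, K i \ (u' ∪ v')).Nonempty :=
      IsCompact.nonempty_iInter_of_directed_nonempty_isCompact_isClosed _ hd' hne'
        (fun i => (hc i).diff hW) (fun i => (hcl i).sdiff hW)
    obtain ⟨x, hx⟩ := hne''
    simp only [Set.mem_iInter, Set.mem_diff] at hx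
    obtain i := Classical.arbitrary ι
    have hxΩ : x ∈ Ω := Set.mem_iInter.mpr fun j => (hx j).1
    exact (hx i).2 (hcov hxΩ)
  obtain ⟨i, hi⟩ := this
  obtain ⟨a, ha⟩ := hune
  obtain ⟨b, hb⟩ := hvne
  have haK : a ∈ K i ∩ u' := ⟨(iInter_subset K i) ha.1, hAu' ⟨ha.1, ha.2⟩⟩
  have hbK : b ∈ K i ∩ v' := ⟨(iInter_subset K i) hb.1, hBv' ⟨hb.1, hb.2⟩⟩
  obtain ⟨x, -, hxu', hxv'⟩ := hconn i u' v' hu' hv' hi ⟨a, haK⟩ ⟨b, hbK⟩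
  exact Set.disjoint_left.mp hu'v' hxu' hxv'

/-- Connectedness part of the abstract global attractor theorem (Temam): in a normed space,
if in addition the absorbing open set `U` is convex and the trajectories `t ↦ S t x` are
continuous in time, then the attractor `A = ω(B₀)` is connected. -/
theorem global_attractor_connected {X : Type*} [NormedAddCommGroup X] [NormedSpace ℝ X]
    (S : ℝ → X → X)
    (hS0 : S 0 = id)
    (hSadd : ∀ t s : ℝ, 0 ≤ t → 0 ≤ s → S (t + s) = S t ∘ S s)
    (hcont : ∀ t : ℝ, 0 ≤ t → Continuous (S t))
    (hcpt : ∃ t₀ : ℝ, 0 < t₀ ∧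
      ∀ B : Set X, Bornology.IsBounded B → IsCompact (closure (S t₀ '' B)))
    (B₀ U : Set X) (hB₀U : B₀ ⊆ U) (hUopen : IsOpen U) (hUconv : Convex ℝ U)
    (hB₀bdd : Bornology.IsBounded B₀) (hB₀ne : B₀.Nonempty)
    (habs : ∀ B : Set X, B ⊆ U → Bornology.IsBounded B →
      ∃ T : ℝ, 0 < T ∧ ∀ t : ℝ, T < t → S t '' B ⊆ B₀)
    (htraj : ∀ x : X, ContinuousOn (fun t : ℝ => S t x) (Set.Ici (0 : ℝ))) :
    IsConnected (omegaLimitSet S B₀) := by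
  classical
  obtain ⟨t₀, ht₀, hcptB⟩ := hcpt
  set C : Set X := convexHull ℝ B₀ with hC
  have hB₀C : B₀ ⊆ C := subset_convexHull ℝ B₀
  have hCU : C ⊆ U := convexHull_min hB₀U hUconv
  have hCbdd : Bornology.IsBounded C := isBounded_convexHull.mpr hB₀bdd
  obtain ⟨T, hT, habsC⟩ := habs C hCU hCbdd
  obtain ⟨x₀, hx₀⟩ := hB₀ne
  have hx₀C : x₀ ∈ C := hB₀C hx₀
  set F : ℝ → Set X := fun s => ⋃ t ∈ Set.Ici s, S t '' C with hF
  set G : ℝ → Set X := fun s => closure (F s) with hG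
  have hFanti : ∀ s s' : ℝ, s ≤ s' → F s' ⊆ F s := by
    intro s s' hss'
    apply Set.biUnion_subset_biUnion_left
    exact Set.Ici_subset_Ici.mpr hss'
  -- each F s (s ≥ 0) is preconnected
  have hFconn : ∀ s : ℝ, 0 ≤ s → IsPreconnected (F s) := by
    intro s hs
    set γ : Set X := (fun t => S t x₀) '' Set.Ici s with hγ
    have hγconn : IsPreconnected γ :=
      isPreconnected_Ici.image _ ((htraj x₀).mono (Set.Ici_subset_Ici.mpr hs))
    have hγsub : γ ⊆ F s := by
      rintro _ ⟨t, ht, rfl⟩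
      exact Set.mem_biUnion ht ⟨x₀, hx₀C, rfl⟩
    have hrw : F s = ⋃ t : Set.Ici s, (S t '' C ∪ γ) := by
      apply Set.Subset.antisymm
      · intro x hx
        simp only [hF, Set.mem_iUnion] at hx ⊢
        obtain ⟨t, ht, hxt⟩ := hx
        exact ⟨⟨t, ht⟩, Or.inl hxt⟩
      · rintro x hx
        simp only [Set.mem_iUnion] at hx
        obtain ⟨⟨t, ht⟩, hx⟩ := hx
        rcases hx with hx | hx
        · exact Set.mem_biUnion ht hx
        · exact hγsub hx
    rw [hrw]
    apply isPreconnected_iUnion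
    · refine ⟨S s x₀, ?_⟩
      simp only [Set.mem_iInter]
      rintro ⟨t, ht⟩
      exact Or.inr ⟨s, Set.self_mem_Ici, rfl⟩
    · rintro ⟨t, ht⟩
      have htc : IsPreconnected (S t '' C) :=
        ((convex_convexHull ℝ B₀).isPreconnected).image _
          (hcont t (le_trans hs ht)).continuousOn
      exact htc.union (S t x₀) ⟨x₀, hx₀C, rfl⟩ ⟨t, ht, rfl⟩ hγconn
  -- eventual compactness
  set s₁ : ℝ := T + t₀ + 1 with hs₁
  have hs₁pos : (0:ℝ) < s₁ := by positivity
  set K : Set X := closure (S t₀ '' B₀) with hK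
  have hKc : IsCompact K := hcptB B₀ hB₀bdd
  have hFsubK : ∀ s : ℝ, s₁ ≤ s → F s ⊆ K := by
    intro s hs
    rintro x hx
    simp only [hF, Set.mem_iUnion] at hx
    obtain ⟨t, ht, z, hz, rfl⟩ := hx
    have h1 : T < t - t₀ := by
      have : s₁ ≤ t := le_trans hs ht
      rw [hs₁] at this; linarith
    have h2 : (0:ℝ) ≤ t - t₀ := by linarith
    have heq : S t z = S t₀ (S (t - t₀) z) := by
      have := hSadd t₀ (t - t₀) ht₀.le h2
      rw [show t₀ + (t - t₀) = t by ring] at this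
      rw [this]; rfl
    rw [heq]
    have : S (t - t₀) z ∈ B₀ := habsC (t - t₀) h1 ⟨z, hz, rfl⟩
    exact subset_closure ⟨_, this, rfl⟩
  have hGcompact : ∀ s : ℝ, s₁ ≤ s → IsCompact (G s) := by
    intro s hs
    exact hKc.of_isClosed_subset isClosed_closure
      (closure_minimal (hFsubK s hs) isClosed_closure)
  -- identify ω(B₀) with the intersection over s ≥ s₁
  have hωeq : omegaLimitSet S B₀ = ⋂ s : Set.Ici s₁, G s := by
    apply Set.Subset.antisymm
    · intro x hx
      simp only [Set.mem_iInter]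
      rintro ⟨s, hs⟩
      have hx' : x ∈ closure (⋃ t ∈ Set.Ici s, S t '' B₀) := by
        simp only [omegaLimitSet, Set.mem_iInter] at hx
        exact hx s (le_trans hs₁pos.le hs)
      refine closure_mono ?_ hx'
      apply Set.iUnion₂_mono
      intro t ht
      exact Set.image_mono hB₀C
    · intro x hx
      simp only [Set.mem_iInter] at hx
      simp only [omegaLimitSet, Set.mem_iInter]
      intro s hs
      set s' : ℝ := max s₁ (s + T + 1) with hs'
      have hxs' : x ∈ G s' := hx ⟨s', Set.mem_Ici.mpr (le_max_left _ _)⟩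
      refine closure_mono ?_ hxs'
      rintro y hy
      simp only [hF, Set.mem_iUnion] at hy
      obtain ⟨t, ht, z, hz, rfl⟩ := hy
      have hts : s + T + 1 ≤ t := le_trans (le_max_right _ _) ht
      have h2 : s ≤ t - (T + 1) := by linarith
      have h3 : (0:ℝ) ≤ t - (T + 1) := le_trans hs h2
      have heq : S t z = S (t - (T + 1)) (S (T + 1) z) := by
        have := hSadd (t - (T + 1)) (T + 1) h3 (by linarith)
        rw [show t - (T + 1) + (T + 1) = t by ring] at this
        rw [this]; rfl
      have hzB : S (T + 1) z ∈ B₀ := habsC (T + 1) (by linarith) ⟨z, hz, rfl⟩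
      rw [heq]
      exact Set.mem_biUnion h2 ⟨_, hzB, rfl⟩
  rw [hωeq]
  haveI : Nonempty (Set.Ici s₁) := ⟨⟨s₁, Set.self_mem_Ici⟩⟩
  apply isConnected_iInter_aux
  · rintro ⟨a, ha⟩ ⟨b, hb⟩
    refine ⟨⟨max a b, Set.mem_Ici.mpr (le_trans (Set.mem_Ici.mp ha) (le_max_left _ _))⟩, ?_, ?_⟩
    · exact closure_mono (hFanti a (max a b) (le_max_left _ _))
    · exact closure_mono (hFanti b (max a b) (le_max_right _ _))
  · rintro ⟨s, hs⟩
    exact ⟨S s x₀, subset_closure (Set.mem_biUnion (Set.self_mem_Ici)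
      ⟨x₀, hx₀C, rfl⟩)⟩
  · rintro ⟨s, hs⟩; exact hGcompact s hs
  · rintro ⟨s, hs⟩; exact isClosed_closure
  · rintro ⟨s, hs⟩
    exact (hFconn s (le_trans hs₁pos.le hs)).closure
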